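/- Let c_1,…,c_n > 0 and let τ be a real number with 0 < τ ≤ n. Define q_i := τ c_i / ∑_{j=1}^n c_j and suppose q_i ≤ 1 for all i ∈ [n]. Then for every vector p ∈ ℝ^n with 0 < p_i ≤ 1 for all i and ∑_{i=1}^n p_i = τ, one has max_{1≤i≤n} c_i/p_i ≥ (∑_{j=1}^n c_j)/τ, and equality holds for p = q. That is, the probabilities q_i minimize the worst-case ratio max_i c_i/p_i among all probability assignments with expected minibatch size τ. -/

import Mathlib

/-- optimality of the importance-sampling probabilities
`q_i = τ c_i / ∑ c_j` for minimizing `max_i c_i / p_i` subject to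
`∑ p_i = τ`, `0 < p_i ≤ 1`. -/
theorem stmt_19 (n : ℕ) (hn : 0 < n) (c : Fin n → ℝ) (hc : ∀ i, 0 < c i)
    (τ : ℝ) (hτ0 : 0 < τ) (hτn : τ ≤ (n : ℝ))
    (q : Fin n → ℝ) (hq : ∀ i, q i = τ * c i / ∑ j, c j)
    (hq1 : ∀ i, q i ≤ 1) :
    (∀ p : Fin n → ℝ, (∀ i, 0 < p i) → (∀ i, p i ≤ 1) → (∑ i, p i = τ) →
        (∑ j, c j) / τ ≤
          Finset.univ.sup' ⟨⟨0, hn⟩, Finset.mem_univ _⟩ (fun i => c i / p i))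
    ∧ Finset.univ.sup' ⟨⟨0, hn⟩, Finset.mem_univ _⟩ (fun i => c i / q i)
        = (∑ j, c j) / τ := by
  have hS : 0 < ∑ j, c j := Finset.sum_pos (fun i _ => hc i) ⟨⟨0, hn⟩, Finset.mem_univ _⟩
  constructor
  · intro p hp0 hp1 hps
    set M := Finset.univ.sup' ⟨⟨0, hn⟩, Finset.mem_univ _⟩ (fun i => c i / p i) with hM
    have hle : ∀ i, c i ≤ M * p i := by
      intro i
      have := Finset.le_sup' (fun i => c i / p i) (Finset.mem_univ i)
      calc c i = (c i / p i) * p i := by rw [div_mul_cancel₀ _ (hp0 i).ne']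
        _ ≤ M * p i := by exact mul_le_mul_of_nonneg_right this (hp0 i).le
    have hsum : ∑ j, c j ≤ M * τ := by
      calc ∑ j, c j ≤ ∑ j, M * p j := Finset.sum_le_sum (fun i _ => hle i)
        _ = M * τ := by rw [← Finset.mul_sum, hps]
    rw [div_le_iff₀ hτ0]
    exact hsum
  · have heq : ∀ i : Fin n, c i / q i = (∑ j, c j) / τ := by
      intro i
      rw [hq i]
      have := (hc i).ne'
      field_simp
    refine (Finset.sup'_congr _ rfl (fun i _ => heq i)).trans ?_
    exact Finset.sup'_const _ _
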